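/- Let x·ξ_s(x) with ξ_s(x) = 1 − K_{s−1}(x)/K_s(x), where K_α is the modified Bessel function of the second kind and s > 0. Then sup_{x>0} |x·ξ_s(x)| < ∞. Consequently, for h, u > 0, |1 − K_{s−1}(u/h)/K_s(u/h)| ≤ C h/u for a constant C depending only on s. -/

import Mathlib

open Real MeasureTheory Set Filter Topology

private lemma bessel_exp_neg_le (n : ℕ) {y : ℝ} (hy : 0 < y) :
    Real.exp (-y) ≤ (n.factorial : ℝ) / y ^ n := by
  have h3 : y ^ n / (n.factorial : ℝ) ≤ Real.exp y :=
    Real.pow_div_factorial_le_exp (x := y) hy.le n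
  rw [le_div_iff₀ (pow_pos hy n)]
  have h4 : y ^ n ≤ (n.factorial : ℝ) * Real.exp y := by
    rw [div_le_iff₀ (by positivity : (0:ℝ) < (n.factorial : ℝ))] at h3; linarith
  calc Real.exp (-y) * y ^ n ≤ Real.exp (-y) * ((n.factorial : ℝ) * Real.exp y) :=
        mul_le_mul_of_nonneg_left h4 (Real.exp_pos _).le
    _ = (n.factorial : ℝ) * (Real.exp (-y) * Real.exp y) := by ring
    _ = (n.factorial : ℝ) := by rw [← Real.exp_add]; simp

private lemma bessel_aux_bdd (α δ : ℝ) (hδ : 0 < δ) :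
    ∃ B : ℝ, 0 ≤ B ∧ ∀ t : ℝ, 0 < t → t ^ α * Real.exp (-δ * (t + 1/t)) ≤ B := by
  obtain ⟨n, hn⟩ := exists_nat_ge |α|
  have hna : α ≤ (n : ℝ) := (le_abs_self α).trans hn
  have hna' : -(n : ℝ) ≤ α := neg_le_of_neg_le ((neg_le_abs α).trans hn)
  refine ⟨(n.factorial : ℝ) / δ ^ n, by positivity, fun t ht => ?_⟩
  have hti : 0 < 1/t := by positivity
  rcases le_total 1 t with h1 | h1
  · have h2 : t ^ α ≤ t ^ (n : ℝ) := Real.rpow_le_rpow_of_exponent_le h1 hna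
    have h3 : Real.exp (-δ * (t + 1/t)) ≤ Real.exp (-(δ * t)) := by
      apply Real.exp_le_exp.2; nlinarith
    have h4 : Real.exp (-(δ * t)) ≤ (n.factorial : ℝ) / (δ * t) ^ n :=
      bessel_exp_neg_le n (by positivity)
    calc t ^ α * Real.exp (-δ * (t + 1/t))
        ≤ t ^ (n:ℝ) * ((n.factorial : ℝ) / (δ * t) ^ n) :=
          mul_le_mul h2 (h3.trans h4) (Real.exp_pos _).le (Real.rpow_nonneg ht.le _)
      _ = (n.factorial : ℝ) / δ ^ n := by
          rw [Real.rpow_natCast, mul_pow]; field_simp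
  · have h2 : t ^ α ≤ t ^ (-(n:ℝ)) := Real.rpow_le_rpow_of_exponent_ge ht h1 hna'
    have h3 : Real.exp (-δ * (t + 1/t)) ≤ Real.exp (-(δ / t)) := by
      apply Real.exp_le_exp.2
      have hd : δ / t = δ * (1/t) := by ring
      nlinarith
    have h4 : Real.exp (-(δ / t)) ≤ (n.factorial : ℝ) / (δ / t) ^ n :=
      bessel_exp_neg_le n (by positivity)
    calc t ^ α * Real.exp (-δ * (t + 1/t))
        ≤ t ^ (-(n:ℝ)) * ((n.factorial : ℝ) / (δ / t) ^ n) :=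
          mul_le_mul h2 (h3.trans h4) (Real.exp_pos _).le (Real.rpow_nonneg ht.le _)
      _ = (n.factorial : ℝ) / δ ^ n := by
          rw [Real.rpow_neg ht.le, Real.rpow_natCast, div_pow]
          field_simp

private lemma bessel_aux_decay (α c : ℝ) (hc : 0 < c) :
    ∃ B : ℝ, 0 ≤ B ∧ ∀ t : ℝ, 0 < t →
      t ^ α * Real.exp (-c * (t + 1/t)) ≤ B * Real.exp (-(c/2) * t) := by
  obtain ⟨B, hB0, hB⟩ := bessel_aux_bdd α (c/2) (by positivity)
  refine ⟨B, hB0, fun t ht => ?_⟩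
  have hsplit : Real.exp (-c * (t + 1/t))
      = Real.exp (-(c/2) * (t + 1/t)) * Real.exp (-(c/2) * (t + 1/t)) := by
    rw [← Real.exp_add]; ring_nf
  have h2 : Real.exp (-(c/2) * (t + 1/t)) ≤ Real.exp (-(c/2) * t) := by
    apply Real.exp_le_exp.2
    have : 0 < 1/t := by positivity
    nlinarith
  calc t ^ α * Real.exp (-c * (t + 1/t))
      = (t ^ α * Real.exp (-(c/2) * (t + 1/t))) * Real.exp (-(c/2) * (t + 1/t)) := by
        rw [hsplit]; ring
    _ ≤ B * Real.exp (-(c/2) * t) :=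
        mul_le_mul (hB t ht) h2 (Real.exp_pos _).le hB0

private lemma bessel_aux_cont (α c : ℝ) :
    ContinuousOn (fun t : ℝ => t ^ α * Real.exp (-c * (t + 1/t))) (Ioi 0) := by
  apply ContinuousOn.mul
  · exact fun t ht => ((Real.continuousAt_rpow_const t α (Or.inl (ne_of_gt ht))).continuousWithinAt)
  · apply Continuous.comp_continuousOn Real.continuous_exp
    apply ContinuousOn.mul continuousOn_const
    exact continuousOn_id.add (continuousOn_const.div continuousOn_id (fun t ht => ne_of_gt ht))

private lemma bessel_aux_integrable (α c : ℝ) (hc : 0 < c) :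
    IntegrableOn (fun t : ℝ => t ^ α * Real.exp (-c * (t + 1/t))) (Ioi 0) := by
  obtain ⟨B, hB0, hB⟩ := bessel_aux_decay α c hc
  apply Integrable.mono' (g := fun t => B * Real.exp (-(c/2) * t))
  · simpa [neg_mul] using
      ((exp_neg_integrableOn_Ioi 0 (by positivity : (0:ℝ) < c/2))).const_mul B
  · exact ((bessel_aux_cont α c).aestronglyMeasurable measurableSet_Ioi)
  · filter_upwards [ae_restrict_mem measurableSet_Ioi] with t ht
    have ht' : (0:ℝ) < t := ht
    rw [Real.norm_eq_abs, abs_of_nonneg (by positivity)]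
    exact hB t ht'

/-- The modified Bessel function of the second kind. -/
noncomputable def besselK (α : ℝ) (t : ℝ) : ℝ :=
  (1 / 2) * ∫ s in Set.Ioi (0 : ℝ), s ^ (α - 1) * Real.exp (-(t / 2) * (s + 1 / s))

private lemma besselK_pos (α : ℝ) {x : ℝ} (hx : 0 < x) : 0 < besselK α x := by
  unfold besselK
  have hint : IntegrableOn (fun t : ℝ => t ^ (α-1) * Real.exp (-(x/2) * (t + 1/t))) (Ioi 0) :=
    bessel_aux_integrable (α-1) (x/2) (by positivity)
  have hpos : 0 < ∫ t in Ioi (0:ℝ), t ^ (α-1) * Real.exp (-(x/2) * (t + 1/t)) := by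
    rw [setIntegral_pos_iff_support_of_nonneg_ae ?_ hint]
    · have hss : (Function.support fun t : ℝ => t ^ (α-1) * Real.exp (-(x/2) * (t + 1/t)))
          ∩ Ioi 0 = Ioi (0:ℝ) := by
        apply inter_eq_right.mpr
        intro t ht
        have ht' : (0:ℝ) < t := ht
        have : 0 < t ^ (α-1) * Real.exp (-(x/2) * (t + 1/t)) := by positivity
        exact Function.mem_support.mpr (ne_of_gt this)
      rw [hss, Real.volume_Ioi]
      exact ENNReal.zero_lt_top
    · filter_upwards [ae_restrict_mem measurableSet_Ioi] with t ht
      have : (0:ℝ) < t := ht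
      positivity
  linarith

private lemma bessel_F_deriv (s c : ℝ) {t : ℝ} (ht : 0 < t) :
    HasDerivAt (fun t : ℝ => t ^ s / (t + 1) * Real.exp (-c * (t + 1/t)))
      ((t ^ (s-1) * Real.exp (-c * (t + 1/t))) * (((s-1)*t + s)/(t+1)^2)
        - c * ((t ^ (s-2) * Real.exp (-c * (t + 1/t))) * (t - 1))) t := by
  have hne : t + 1 ≠ 0 := by positivity
  have h1 : HasDerivAt (fun t : ℝ => t ^ s) (s * t ^ (s-1)) t :=
    Real.hasDerivAt_rpow_const (Or.inl ht.ne')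
  have h2 : HasDerivAt (fun t : ℝ => t + 1) 1 t := (hasDerivAt_id t).add_const 1
  have hdiv := h1.div h2 hne
  have hinv : HasDerivAt (fun t : ℝ => 1/t) (-(t^2)⁻¹) t := by
    simpa [one_div] using hasDerivAt_inv ht.ne'
  have hu : HasDerivAt (fun t : ℝ => -c * (t + 1/t)) (-c * (1 + -(t^2)⁻¹)) t :=
    ((hasDerivAt_id t).add hinv).const_mul (-c)
  have hF := hdiv.mul hu.exp
  refine hF.congr_deriv ?_
  symm
  simp only [Pi.div_apply]
  have e2 : t ^ s = t ^ (s-1) * t := by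
    rw [← Real.rpow_add_one ht.ne' (s-1)]; norm_num
  have e1 : t ^ (s-1) = t ^ (s-2) * t := by
    rw [← Real.rpow_add_one ht.ne' (s-2), show s-2+1 = s-1 by ring]
  rw [e2, e1]
  have ht2 : (t:ℝ)^2 ≠ 0 := by positivity
  field_simp
  ring

private lemma besselK_diff_bound {s : ℝ} (hs : 0 < s) {x : ℝ} (hx : 0 < x) :
    |x * (besselK s x - besselK (s-1) x)| ≤ (2 * (|s-1| + s)) * besselK s x := by
  have hc : (0:ℝ) < x/2 := by positivity
  set M : ℝ := |s-1| + s with hM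
  have hM0 : 0 ≤ M := by positivity
  have hI1 : IntegrableOn (fun t : ℝ => t ^ (s-1) * Real.exp (-(x/2) * (t + 1/t))) (Ioi 0) :=
    bessel_aux_integrable (s-1) (x/2) hc
  have hI2 : IntegrableOn (fun t : ℝ => t ^ (s-2) * Real.exp (-(x/2) * (t + 1/t))) (Ioi 0) :=
    bessel_aux_integrable (s-2) (x/2) hc
  -- pointwise bound for A
  have hAbd : ∀ t : ℝ, 0 < t → |((s-1)*t + s)/(t+1)^2| ≤ M := by
    intro t ht
    rw [abs_div, abs_of_nonneg (by positivity : (0:ℝ) ≤ (t+1)^2),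
      div_le_iff₀ (by positivity : (0:ℝ) < (t+1)^2)]
    have h5 : |(s-1)*t + s| ≤ |s-1| * t + s := by
      calc |(s-1)*t + s| ≤ |(s-1)*t| + |s| := abs_add_le _ _
        _ = |s-1| * t + s := by rw [abs_mul, abs_of_nonneg ht.le, abs_of_nonneg hs.le]
    nlinarith [abs_nonneg (s-1), mul_nonneg (abs_nonneg (s-1)) (sq_nonneg t),
      mul_nonneg hs.le (sq_nonneg t), mul_nonneg (abs_nonneg (s-1)) ht.le,
      mul_nonneg hs.le ht.le, hM]
  have hIA : IntegrableOn
      (fun t : ℝ => (t ^ (s-1) * Real.exp (-(x/2) * (t + 1/t))) * (((s-1)*t + s)/(t+1)^2))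
      (Ioi 0) := by
    apply Integrable.mono'
      (g := fun t : ℝ => (t ^ (s-1) * Real.exp (-(x/2) * (t + 1/t))) * M)
    · exact hI1.mul_const M
    · apply ContinuousOn.aestronglyMeasurable _ measurableSet_Ioi
      apply (bessel_aux_cont (s-1) (x/2)).mul
      apply ContinuousOn.div (by fun_prop) (by fun_prop)
      intro t ht
      have : (0:ℝ) < t := ht
      positivity
    · filter_upwards [ae_restrict_mem measurableSet_Ioi] with t ht
      have ht' : (0:ℝ) < t := ht
      rw [norm_mul, Real.norm_eq_abs, Real.norm_eq_abs,
        abs_of_nonneg (by positivity : (0:ℝ) ≤ t ^ (s-1) * Real.exp (-(x/2) * (t + 1/t)))]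
      exact mul_le_mul_of_nonneg_left (hAbd t ht') (by positivity)
  have hIB : IntegrableOn
      (fun t : ℝ => (t ^ (s-2) * Real.exp (-(x/2) * (t + 1/t))) * (t - 1)) (Ioi 0) := by
    apply Integrable.mono'
      (g := fun t : ℝ => t ^ (s-1) * Real.exp (-(x/2) * (t + 1/t))
        + t ^ (s-2) * Real.exp (-(x/2) * (t + 1/t)))
    · exact hI1.add hI2
    · apply ContinuousOn.aestronglyMeasurable _ measurableSet_Ioi
      exact (bessel_aux_cont (s-2) (x/2)).mul (by fun_prop)
    · filter_upwards [ae_restrict_mem measurableSet_Ioi] with t ht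
      have ht' : (0:ℝ) < t := ht
      have e1 : t ^ (s-1) = t ^ (s-2) * t := by
        rw [← Real.rpow_add_one ht'.ne' (s-2), show s-2+1 = s-1 by ring]
      rw [norm_mul, Real.norm_eq_abs, Real.norm_eq_abs,
        abs_of_nonneg (by positivity : (0:ℝ) ≤ t ^ (s-2) * Real.exp (-(x/2) * (t + 1/t)))]
      have habs : |t - 1| ≤ t + 1 := abs_le.mpr ⟨by linarith, by linarith⟩
      calc (t ^ (s-2) * Real.exp (-(x/2) * (t + 1/t))) * |t - 1|
          ≤ (t ^ (s-2) * Real.exp (-(x/2) * (t + 1/t))) * (t + 1) :=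
            mul_le_mul_of_nonneg_left habs (by positivity)
        _ = t ^ (s-1) * Real.exp (-(x/2) * (t + 1/t))
            + t ^ (s-2) * Real.exp (-(x/2) * (t + 1/t)) := by rw [e1]; ring
  -- FTC on (0, ∞)
  have hF0 : (fun t : ℝ => t ^ s / (t + 1) * Real.exp (-(x/2) * (t + 1/t))) 0 = 0 := by
    simp [Real.zero_rpow hs.ne']
  have hcont : ContinuousWithinAt
      (fun t : ℝ => t ^ s / (t + 1) * Real.exp (-(x/2) * (t + 1/t))) (Ici 0) 0 := by
    unfold ContinuousWithinAt
    rw [hF0]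
    apply squeeze_zero' (g := fun t : ℝ => t ^ s)
    · filter_upwards [self_mem_nhdsWithin] with t ht
      have h0t : (0:ℝ) ≤ t := ht
      have h1t : (0:ℝ) < t + 1 := by linarith
      have h2t : (0:ℝ) ≤ 1/t := by positivity
      exact mul_nonneg (div_nonneg (Real.rpow_nonneg h0t s) h1t.le) (Real.exp_pos _).le
    · filter_upwards [self_mem_nhdsWithin] with t ht
      have h0t : (0:ℝ) ≤ t := ht
      have h1t : (0:ℝ) < t + 1 := by linarith
      have h2t : (0:ℝ) ≤ 1/t := by positivity
      have hexp1 : Real.exp (-(x/2) * (t + 1/t)) ≤ 1 := by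
        rw [Real.exp_le_one_iff]
        nlinarith
      calc t ^ s / (t + 1) * Real.exp (-(x/2) * (t + 1/t))
          ≤ t ^ s / (t + 1) * 1 :=
            mul_le_mul_of_nonneg_left hexp1 (div_nonneg (Real.rpow_nonneg h0t s) h1t.le)
        _ = t ^ s / (t + 1) := by ring
        _ ≤ t ^ s := div_le_self (Real.rpow_nonneg h0t s) (by linarith)
    · have hcw : ContinuousWithinAt (fun t : ℝ => t ^ s) (Ici 0) 0 :=
        (Real.continuousAt_rpow_const 0 s (Or.inr hs.le)).continuousWithinAt
      unfold ContinuousWithinAt at hcw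
      simpa [Real.zero_rpow hs.ne'] using hcw
  have htend : Tendsto (fun t : ℝ => t ^ s / (t + 1) * Real.exp (-(x/2) * (t + 1/t)))
      atTop (𝓝 0) := by
    obtain ⟨B, hB0, hB⟩ := bessel_aux_decay s (x/2) hc
    apply squeeze_zero' (g := fun t : ℝ => B * Real.exp (-(x/2/2) * t))
    · filter_upwards [eventually_gt_atTop (0:ℝ)] with t ht
      have h1t : (0:ℝ) < t + 1 := by linarith
      positivity
    · filter_upwards [eventually_gt_atTop (0:ℝ)] with t ht
      have h1t : (0:ℝ) < t + 1 := by linarith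
      calc t ^ s / (t + 1) * Real.exp (-(x/2) * (t + 1/t))
          ≤ t ^ s * Real.exp (-(x/2) * (t + 1/t)) :=
            mul_le_mul_of_nonneg_right
              (div_le_self (Real.rpow_nonneg ht.le s) (by linarith)) (Real.exp_pos _).le
        _ ≤ B * Real.exp (-(x/2/2) * t) := hB t ht
    · have h2 : Tendsto (fun t : ℝ => -(x/2/2) * t) atTop atBot := by
        exact Filter.Tendsto.const_mul_atTop_of_neg (by simp; positivity : -(x/2/2) < 0) tendsto_id
      have h1 : Tendsto (fun t : ℝ => Real.exp (-(x/2/2) * t)) atTop (𝓝 0) := by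
        simpa only [Function.comp_def] using Real.tendsto_exp_atBot.comp h2
      simpa using h1.const_mul B
  have hderiv : ∀ t ∈ Ioi (0:ℝ), HasDerivAt
      (fun t : ℝ => t ^ s / (t + 1) * Real.exp (-(x/2) * (t + 1/t)))
      ((fun t : ℝ => (t ^ (s-1) * Real.exp (-(x/2) * (t + 1/t))) * (((s-1)*t + s)/(t+1)^2)
        - (x/2) * ((t ^ (s-2) * Real.exp (-(x/2) * (t + 1/t))) * (t - 1))) t) t :=
    fun t ht => bessel_F_deriv s (x/2) ht
  have hIF : IntegrableOn
      (fun t : ℝ => (t ^ (s-1) * Real.exp (-(x/2) * (t + 1/t))) * (((s-1)*t + s)/(t+1)^2)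
        - (x/2) * ((t ^ (s-2) * Real.exp (-(x/2) * (t + 1/t))) * (t - 1))) (Ioi 0) :=
    hIA.sub (hIB.const_mul (x/2))
  have hIBP := integral_Ioi_of_hasDerivAt_of_tendsto hcont hderiv hIF htend
  rw [integral_sub hIA (hIB.const_mul (x/2)), integral_const_mul,
    show (0:ℝ) ^ s / (0 + 1) * Real.exp (-(x / 2) * (0 + 1 / 0)) = 0 by
      rw [Real.zero_rpow hs.ne']; norm_num,
    sub_zero] at hIBP
  -- ∫ A = (x/2) * ∫ B
  have h7 : (∫ t in Ioi (0:ℝ),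
        (t ^ (s-1) * Real.exp (-(x/2) * (t + 1/t))) * (((s-1)*t + s)/(t+1)^2))
      = (x/2) * ∫ t in Ioi (0:ℝ),
        (t ^ (s-2) * Real.exp (-(x/2) * (t + 1/t))) * (t - 1) := by linarith
  -- ∫ B = ∫ t^{s-1} E − ∫ t^{s-2} E
  have h8 : (∫ t in Ioi (0:ℝ), (t ^ (s-2) * Real.exp (-(x/2) * (t + 1/t))) * (t - 1))
      = (∫ t in Ioi (0:ℝ), t ^ (s-1) * Real.exp (-(x/2) * (t + 1/t)))
        - ∫ t in Ioi (0:ℝ), t ^ (s-2) * Real.exp (-(x/2) * (t + 1/t)) := by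
    rw [← integral_sub hI1 hI2]
    apply setIntegral_congr_fun measurableSet_Ioi
    intro t ht
    have ht' : (0:ℝ) < t := ht
    have e1 : t ^ (s-1) = t ^ (s-2) * t := by
      rw [← Real.rpow_add_one ht'.ne' (s-2), show s-2+1 = s-1 by ring]
    simp only [e1]; ring
  have hKs : (∫ t in Ioi (0:ℝ), t ^ (s-1) * Real.exp (-(x/2) * (t + 1/t)))
      = 2 * besselK s x := by
    unfold besselK; ring
  have hKs1 : (∫ t in Ioi (0:ℝ), t ^ (s-2) * Real.exp (-(x/2) * (t + 1/t)))
      = 2 * besselK (s-1) x := by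
    unfold besselK
    rw [show s - 1 - 1 = s - 2 by ring]
    ring
  have h9 : x * (besselK s x - besselK (s-1) x)
      = ∫ t in Ioi (0:ℝ),
        (t ^ (s-1) * Real.exp (-(x/2) * (t + 1/t))) * (((s-1)*t + s)/(t+1)^2) := by
    rw [h7, h8, hKs, hKs1]; ring
  rw [h9]
  -- bound the integral
  calc |∫ t in Ioi (0:ℝ),
        (t ^ (s-1) * Real.exp (-(x/2) * (t + 1/t))) * (((s-1)*t + s)/(t+1)^2)|
      ≤ ∫ t in Ioi (0:ℝ),
        |(t ^ (s-1) * Real.exp (-(x/2) * (t + 1/t))) * (((s-1)*t + s)/(t+1)^2)| := by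
        exact
          norm_integral_le_integral_norm
            (fun t : ℝ =>
              (t ^ (s-1) * Real.exp (-(x/2) * (t + 1/t))) * (((s-1)*t + s)/(t+1)^2))
            (μ := volume.restrict (Ioi (0:ℝ)))
    _ ≤ ∫ t in Ioi (0:ℝ), (t ^ (s-1) * Real.exp (-(x/2) * (t + 1/t))) * M := by
        apply setIntegral_mono_on hIA.abs (hI1.mul_const M) measurableSet_Ioi
        intro t ht
        have ht' : (0:ℝ) < t := ht
        rw [abs_mul,
          abs_of_nonneg (by positivity : (0:ℝ) ≤ t ^ (s-1) * Real.exp (-(x/2) * (t + 1/t)))]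
        exact mul_le_mul_of_nonneg_left (hAbd t ht') (by positivity)
    _ = (2 * M) * besselK s x := by
        rw [integral_mul_const, hKs]; ring

theorem besselK_ratio_bound {s : ℝ} (hs : 0 < s) :
    ∃ C : ℝ, (∀ x : ℝ, 0 < x → |x * (1 - besselK (s - 1) x / besselK s x)| ≤ C) ∧
      ∀ h u : ℝ, 0 < h → 0 < u →
        |1 - besselK (s - 1) (u / h) / besselK s (u / h)| ≤ C * h / u := by
  have key : ∀ x : ℝ, 0 < x →
      |x * (1 - besselK (s - 1) x / besselK s x)| ≤ 2 * (|s-1| + s) := by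
    intro x hx
    have hKpos := besselK_pos s hx
    have hd := besselK_diff_bound hs hx
    have heq : x * (1 - besselK (s - 1) x / besselK s x)
        = x * (besselK s x - besselK (s-1) x) / besselK s x := by
      field_simp
    rw [heq, abs_div, abs_of_pos hKpos, div_le_iff₀ hKpos]
    exact hd
  refine ⟨2 * (|s-1| + s), key, fun h u hh hu => ?_⟩
  have hx : (0:ℝ) < u / h := by positivity
  have h1 := key (u / h) hx
  rw [abs_mul, abs_of_pos hx] at h1
  have h2 : |1 - besselK (s - 1) (u / h) / besselK s (u / h)| ≤ (2 * (|s-1| + s)) / (u / h) := by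
    rw [le_div_iff₀ hx, mul_comm]
    exact h1
  calc |1 - besselK (s - 1) (u / h) / besselK s (u / h)|
      ≤ (2 * (|s-1| + s)) / (u / h) := h2
    _ = 2 * (|s-1| + s) * h / u := by
        rw [div_div_eq_mul_div]
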